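/- Under the p-th order inexact adaptive regularization framework described in the context (p ≥ 3), the sequence of regularization parameters is bounded: there exists σ_max ∈ ℝ such that σ_k ≤ σ_max for every k ≥ 0. -/

import Mathlib

open Set

lemma line_itder {E : Type*} [NormedAddCommGroup E] [NormedSpace ℝ E]
    {P : ℕ} {f : E → ℝ} (hf : ContDiff ℝ (P : ℕ∞) f) (x s : E) :
    ∀ i : ℕ, i ≤ P →
      iteratedDeriv i (fun t : ℝ => f (x + t • s)) =
        fun t => iteratedFDeriv ℝ i f (x + t • s) (fun _ => s) := by
  intro i
  induction i with
  | zero => intro _; funext t; simp [iteratedFDeriv_zero_apply]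
  | succ i ih =>
    intro hi
    rw [iteratedDeriv_succ, ih (by omega)]
    funext t
    have hdiff : Differentiable ℝ (iteratedFDeriv ℝ i f) :=
      hf.differentiable_iteratedFDeriv (by exact_mod_cast (by omega : i < P))
    have hφ : HasDerivAt (fun t : ℝ => x + t • s) s t := by
      simpa using ((hasDerivAt_id t).smul_const s).const_add x
    have hF : HasFDerivAt (iteratedFDeriv ℝ i f)
        (fderiv ℝ (iteratedFDeriv ℝ i f) (x + t • s)) (x + t • s) :=
      (hdiff _).hasFDerivAt
    have hcomp : HasDerivAt (fun t : ℝ => iteratedFDeriv ℝ i f (x + t • s))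
        (fderiv ℝ (iteratedFDeriv ℝ i f) (x + t • s) s) t :=
      hF.comp_hasDerivAt t hφ
    have happ : HasDerivAt (fun t : ℝ => iteratedFDeriv ℝ i f (x + t • s) (fun _ => s))
        ((fderiv ℝ (iteratedFDeriv ℝ i f) (x + t • s) s) (fun _ => s)) t := by
      have := ((ContinuousMultilinearMap.apply ℝ (fun _ : Fin i => E) ℝ
        (fun _ => s)).hasFDerivAt).comp_hasDerivAt t hcomp
      exact this
    rw [happ.deriv]
    rw [iteratedFDeriv_succ_apply_left]
    congr 1

lemma taylor_ub {E : Type*} [NormedAddCommGroup E] [NormedSpace ℝ E]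
    {P : ℕ} (hP : 1 ≤ P) {f : E → ℝ} (hf : ContDiff ℝ (P : ℕ∞) f)
    {Lp : ℝ} (hLp0 : 0 ≤ Lp)
    (hA3 : ∀ x y, ‖iteratedFDeriv ℝ P f x - iteratedFDeriv ℝ P f y‖ ≤ Lp * ‖x - y‖)
    (x s : E) :
    f (x + s) ≤ f x +
      (∑ i ∈ Finset.Icc 1 (P - 1),
        (1 / (i.factorial : ℝ)) * iteratedFDeriv ℝ i f x (fun _ => s)) +
      (1 / (P.factorial : ℝ)) * iteratedFDeriv ℝ P f x (fun _ => s) +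
      Lp / (P.factorial : ℝ) * ‖s‖ ^ (P + 1) := by
  classical
  set g : ℝ → ℝ := fun t => f (x + t • s) with hg_def
  have hφ : ContDiff ℝ (P : ℕ∞) (fun t : ℝ => x + t • s) :=
    contDiff_const.add (contDiff_id.smul contDiff_const)
  have hg : ContDiff ℝ (P : ℕ∞) g := hf.comp hφ
  have hkey := line_itder hf x s
  -- equality of within and global iterated derivs on Icc 0 1
  have hwithin : ∀ i : ℕ, i ≤ P → ∀ t ∈ Icc (0:ℝ) 1,
      iteratedDerivWithin i g (Icc 0 1) t = iteratedDeriv i g t := by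
    intro i hi t ht
    rw [iteratedDerivWithin_eq_iteratedFDerivWithin, iteratedDeriv_eq_iteratedFDeriv]
    congr 1
    have h1 : HasFTaylorSeriesUpToOn (P : ℕ∞) g (ftaylorSeriesWithin ℝ g univ) (Icc 0 1) :=
      ((hg.contDiffOn (s := univ)).ftaylorSeriesWithin uniqueDiffOn_univ).mono (subset_univ _)
    have h2 := h1.eq_iteratedFDerivWithin_of_uniqueDiffOn (by exact_mod_cast hi)
      (uniqueDiffOn_Icc zero_lt_one) ht
    rw [← h2]
    simp [ftaylorSeriesWithin, iteratedFDerivWithin_univ]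
  have hP1 : P - 1 + 1 = P := by omega
  have hcont : ContDiffOn ℝ (P - 1 : ℕ) g (Icc 0 1) :=
    (hg.of_le (Nat.cast_le.mpr (by omega : P - 1 ≤ P))).contDiffOn
  have hdiffg : Differentiable ℝ (iteratedDeriv (P - 1) g) := by
    rw [hkey (P - 1) (by omega)]
    have hdiff : Differentiable ℝ (iteratedFDeriv ℝ (P-1) f) :=
      hf.differentiable_iteratedFDeriv (Nat.cast_lt.mpr (by omega : P - 1 < P))
    exact (ContinuousMultilinearMap.apply ℝ (fun _ : Fin (P-1) => E) ℝ
      (fun _ => s)).differentiable.comp (hdiff.comp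
        ((differentiable_id.smul_const s).const_add x))
  have hdiffon : DifferentiableOn ℝ (iteratedDerivWithin (P - 1) g (Icc 0 1)) (Ioo 0 1) := by
    apply DifferentiableOn.congr (f := iteratedDeriv (P-1) g) (hdiffg.differentiableOn)
    intro t ht
    exact hwithin (P-1) (by omega) t (Ioo_subset_Icc_self ht)
  obtain ⟨c, hc, hTay⟩ := taylor_mean_remainder_lagrange (f := g) (n := P - 1) (x₀ := 0) (x := 1)
    zero_ne_one (by rw [uIcc_of_le zero_le_one]; exact hcont)
    (by rw [uIcc_of_le zero_le_one, uIoo_of_le zero_le_one]; exact hdiffon)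
  rw [uIcc_of_le zero_le_one] at hTay
  rw [uIoo_of_le zero_le_one] at hc
  rw [hP1] at hTay
  -- rewrite remainder
  have hrem : iteratedDerivWithin P g (Icc 0 1) c =
      iteratedFDeriv ℝ P f (x + c • s) (fun _ => s) := by
    rw [hwithin P le_rfl c (Ioo_subset_Icc_self hc), hkey P le_rfl]
  -- rewrite taylor polynomial
  have hpoly : taylorWithinEval g (P - 1) (Icc 0 1) 0 1 =
      ∑ k ∈ Finset.range P, (1 / (k.factorial : ℝ)) *
        iteratedFDeriv ℝ k f x (fun _ => s) := by
    rw [taylor_within_apply, hP1]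
    apply Finset.sum_congr rfl
    intro k hk
    have hkP : k ≤ P := le_of_lt (Finset.mem_range.mp hk)
    rw [hwithin k hkP 0 (by constructor <;> norm_num), hkey k hkP]
    simp [smul_eq_mul, one_div]
  have hg1 : g 1 = f (x + s) := by simp [hg_def]
  have hg1' : g 1 = taylorWithinEval g (P-1) (Icc 0 1) 0 1 +
      iteratedDerivWithin P g (Icc 0 1) c * 1 ^ P / (P.factorial : ℝ) := by
    have := hTay
    push_cast at this ⊢
    linarith [this]
  -- bound the remainder derivative
  have hbound : iteratedFDeriv ℝ P f (x + c • s) (fun _ => s) ≤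
      iteratedFDeriv ℝ P f x (fun _ => s) + Lp * ‖s‖ ^ (P + 1) := by
    have h1 : iteratedFDeriv ℝ P f (x + c • s) (fun _ => s) -
        iteratedFDeriv ℝ P f x (fun _ => s) =
        (iteratedFDeriv ℝ P f (x + c • s) - iteratedFDeriv ℝ P f x) (fun _ => s) := by
      simp [ContinuousMultilinearMap.sub_apply]
    have h2 : ‖(iteratedFDeriv ℝ P f (x + c • s) - iteratedFDeriv ℝ P f x)
        (fun _ : Fin P => s)‖ ≤
        ‖iteratedFDeriv ℝ P f (x + c • s) - iteratedFDeriv ℝ P f x‖ * ‖s‖ ^ P := by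
      have := (iteratedFDeriv ℝ P f (x + c • s) - iteratedFDeriv ℝ P f x).le_opNorm
        (fun _ : Fin P => s)
      simpa [Finset.prod_const] using this
    have h3 : ‖iteratedFDeriv ℝ P f (x + c • s) - iteratedFDeriv ℝ P f x‖ ≤ Lp * ‖s‖ := by
      have := hA3 (x + c • s) x
      have hcs : ‖x + c • s - x‖ ≤ ‖s‖ := by
        have : x + c • s - x = c • s := by abel
        rw [this, norm_smul]
        have hc1 : |c| ≤ 1 := by
          rw [abs_le]; exact ⟨by linarith [hc.1], le_of_lt hc.2⟩
        calc ‖c‖ * ‖s‖ ≤ 1 * ‖s‖ := by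
              apply mul_le_mul_of_nonneg_right _ (norm_nonneg s)
              simpa [Real.norm_eq_abs] using hc1
          _ = ‖s‖ := one_mul _
      calc ‖iteratedFDeriv ℝ P f (x + c • s) - iteratedFDeriv ℝ P f x‖
          ≤ Lp * ‖x + c • s - x‖ := this
        _ ≤ Lp * ‖s‖ := by apply mul_le_mul_of_nonneg_left hcs hLp0
    have h4 : (iteratedFDeriv ℝ P f (x + c • s) - iteratedFDeriv ℝ P f x)
        (fun _ : Fin P => s) ≤ Lp * ‖s‖ ^ (P + 1) := by
      calc (iteratedFDeriv ℝ P f (x + c • s) - iteratedFDeriv ℝ P f x) (fun _ : Fin P => s)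
          ≤ ‖(iteratedFDeriv ℝ P f (x + c • s) - iteratedFDeriv ℝ P f x)
              (fun _ : Fin P => s)‖ := le_abs_self _
        _ ≤ (Lp * ‖s‖) * ‖s‖ ^ P := le_trans h2 (by
            apply mul_le_mul_of_nonneg_right h3 (by positivity))
        _ = Lp * ‖s‖ ^ (P + 1) := by ring
    linarith [h1 ▸ h4]
  -- split the range sum
  have hsplit : ∑ k ∈ Finset.range P, (1 / (k.factorial : ℝ)) *
        iteratedFDeriv ℝ k f x (fun _ => s) =
      f x + ∑ i ∈ Finset.Icc 1 (P - 1),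
        (1 / (i.factorial : ℝ)) * iteratedFDeriv ℝ i f x (fun _ => s) := by
    have h0 : Finset.Icc 1 (P-1) = Finset.Ico 1 P := by
      rw [← hP1]; exact (Finset.Ico_add_one_right_eq_Icc 1 (P-1)).symm
    rw [h0, Finset.range_eq_Ico, Finset.sum_eq_sum_Ico_succ_bot (by omega : 0 < P)]
    simp [iteratedFDeriv_zero_apply]
  rw [← hg1, hg1', hpoly, hsplit, hrem]
  have hfac : (0:ℝ) < (P.factorial : ℝ) := by exact_mod_cast P.factorial_pos
  rw [div_eq_mul_inv, one_pow, mul_one]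
  have := hbound
  have h5 : ((iteratedFDeriv ℝ P f (x + c • s)) fun _ => s) * ((P.factorial : ℝ))⁻¹ ≤
      (((iteratedFDeriv ℝ P f x) fun _ => s) + Lp * ‖s‖ ^ (P + 1)) * ((P.factorial : ℝ))⁻¹ :=
    mul_le_mul_of_nonneg_right this (by positivity)
  have hrw : (((iteratedFDeriv ℝ P f x) fun _ => s) + Lp * ‖s‖ ^ (P + 1)) * ((P.factorial : ℝ))⁻¹
      = 1 / (P.factorial : ℝ) * ((iteratedFDeriv ℝ P f x) fun _ => s)
        + Lp / (P.factorial : ℝ) * ‖s‖ ^ (P + 1) := by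
    field_simp
    try ring
  linarith [hrw ▸ h5]

open scoped InnerProductSpace

theorem stmt_14 (p n m : ℕ) (hp : 3 ≤ p) (hn : 1 ≤ n) (hm : 1 ≤ m)
    (f : EuclideanSpace ℝ (Fin n) → ℝ)
    (hf : ContDiff ℝ (p : ℕ∞) f)
    (f_low : ℝ) (hflow : ∀ x, f_low ≤ f x)
    (Lp : ℝ) (hLp : 3 ≤ Lp)
    (hA3 : ∀ x y, ‖iteratedFDeriv ℝ p f x - iteratedFDeriv ℝ p f y‖ ≤ Lp * ‖x - y‖)
    (κhigh : ℝ) (hκhigh : 0 ≤ κhigh)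
    (hA4 : ∀ (x : EuclideanSpace ℝ (Fin n)) (i : ℕ), 3 ≤ i → i ≤ p - 1 →
      ∀ d : EuclideanSpace ℝ (Fin n), ‖d‖ ≤ 1 →
        -κhigh ≤ iteratedFDeriv ℝ i f x (fun _ => d))
    (κp : ℝ) (hκp : 0 ≤ κp)
    (hA5 : ∀ x, ‖iteratedFDeriv ℝ p f x‖ ≤ κp)
    (σ₀ θ₁ θ₂ κD κE : ℝ) (hσ₀ : 0 < σ₀) (hθ₁ : 1 < θ₁) (hθ₂ : 1 < θ₂)
    (hκD : 0 ≤ κD) (hκE : 0 ≤ κE)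
    (x s : ℕ → EuclideanSpace ℝ (Fin n))
    (T : ℕ → ContinuousMultilinearMap ℝ (fun _ : Fin p => EuclideanSpace ℝ (Fin n)) ℝ)
    (hTsym : ∀ (k : ℕ) (π : Equiv.Perm (Fin p)) (u : Fin p → EuclideanSpace ℝ (Fin n)),
      T k (fun i => u (π i)) = T k u)
    (σ : ℕ → ℝ) (hσ0 : σ 0 = σ₀)
    (hx : ∀ k, x (k + 1) = x k + s k)
    (hσrec : ∀ k, σ (k + 1) = σ k + σ k * ‖s k‖ ^ (p + 1))
    (ξ : ℕ → ℝ)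
    (hξ : ∀ k, ξ k = ∑ i ∈ Finset.Icc 1 (2 * m - 1),
      if i ≤ k then ‖s (k - i)‖ ^ (p + 1) else 1)
    (ha : ∀ k, ‖T k - iteratedFDeriv ℝ p f (x k)‖ ^ (p + 1) ≤ κD * ξ k)
    (ha' : ∀ k, ‖T k‖ ≤ κE)
    (hb : ∀ k,
      (∑ i ∈ Finset.Icc 1 (p - 1),
        (1 / (i.factorial : ℝ)) * iteratedFDeriv ℝ i f (x k) (fun _ => s k)) +
      (1 / (p.factorial : ℝ)) * T k (fun _ => s k) +
      (σ k / ((p + 1).factorial : ℝ)) * ‖s k‖ ^ (p + 1) ≤ 0)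
    (G : ℕ → (EuclideanSpace ℝ (Fin n) →L[ℝ] ℝ))
    (hG : ∀ (k : ℕ) (d : EuclideanSpace ℝ (Fin n)),
      G k d = ⟪gradient f (x k), d⟫_ℝ +
        (∑ i ∈ Finset.Icc 2 (p - 1), (1 / ((i - 1).factorial : ℝ)) *
          iteratedFDeriv ℝ i f (x k) (fun j : Fin i => if (j : ℕ) = i - 1 then d else s k)) +
        (1 / ((p - 1).factorial : ℝ)) *
          T k (fun j : Fin p => if (j : ℕ) = p - 1 then d else s k))
    (hc : ∀ k, ‖G k‖ ≤ θ₁ * σ k / (p.factorial : ℝ) * ‖s k‖ ^ p)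
    (Hq : ℕ → EuclideanSpace ℝ (Fin n) → EuclideanSpace ℝ (Fin n) → ℝ)
    (hHq : ∀ (k : ℕ) (d d' : EuclideanSpace ℝ (Fin n)),
      Hq k d d' = iteratedFDeriv ℝ 2 f (x k) ![d, d'] +
        (∑ i ∈ Finset.Icc 3 (p - 1), (1 / ((i - 2).factorial : ℝ)) *
          iteratedFDeriv ℝ i f (x k)
            (fun j : Fin i => if (j : ℕ) = i - 1 then d' else
              if (j : ℕ) = i - 2 then d else s k)) +
        (1 / ((p - 2).factorial : ℝ)) *
          T k (fun j : Fin p => if (j : ℕ) = p - 1 then d' else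
            if (j : ℕ) = p - 2 then d else s k))
    (hd : ∀ k, sSup {r : ℝ |
        ∃ d : EuclideanSpace ℝ (Fin n), ‖d‖ = 1 ∧ r = max 0 (-(Hq k d d))} ≤
      θ₂ * σ k / ((p - 1).factorial : ℝ) * ‖s k‖ ^ (p - 1)) :
    ∃ σmax : ℝ, ∀ k : ℕ, σ k ≤ σmax := by
  classical
  set W : ℕ → ℝ := fun k => ‖s k‖ ^ (p + 1) with hW_def
  have hWnn : ∀ k, 0 ≤ W k := fun k => by positivity
  set c : ℝ := 1 / (p.factorial : ℝ) with hc_def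
  have hc0 : 0 < c := by
    have : (0:ℝ) < (p.factorial : ℝ) := by exact_mod_cast p.factorial_pos
    positivity
  set P1 : ℝ := ((p + 1).factorial : ℝ) with hP1_def
  have hP1 : 0 < P1 := by simp only [hP1_def]; exact_mod_cast (p+1).factorial_pos
  have hξnn : ∀ k, 0 ≤ ξ k := by
    intro k
    rw [hξ k]
    apply Finset.sum_nonneg
    intro i _
    split_ifs <;> positivity
  set M : ℕ := 2 * m - 1 with hM_def
  have hM1 : 1 ≤ M := by omega
  set M' : ℝ := (M : ℝ) with hM'_def
  have hM'1 : 1 ≤ M' := by simp only [hM'_def]; exact_mod_cast hM1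
  have hξ2 : ∀ k, ξ k = ∑ i ∈ Finset.Icc 1 M,
      (if i ≤ k then W (k - i) else (1:ℝ)) := by
    intro k
    rw [hξ k, hM_def, hW_def]
  have hWval : ∀ j, W j = ‖s j‖ ^ (p + 1) := by
    intro j; rw [hW_def]
  have hσrec' : ∀ k, σ (k + 1) = σ k + σ k * W k := by
    intro k; rw [hσrec k, hW_def]
  clear_value W c P1 M M'
  -- per-step decrease
  have hstep : ∀ k, σ k / P1 * W k ≤
      f (x k) - f (x (k + 1)) + c * κD * ξ k + c * (Lp + 1) * W k := by
    intro k
    have htay := taylor_ub (by omega : 1 ≤ p) hf (by linarith : (0:ℝ) ≤ Lp) hA3 (x k) (s k)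
    rw [← hx k] at htay
    -- key norm bound
    have hkey : ‖T k - iteratedFDeriv ℝ p f (x k)‖ * ‖s k‖ ^ p ≤ κD * ξ k + W k := by
      have hmax : ‖T k - iteratedFDeriv ℝ p f (x k)‖ * ‖s k‖ ^ p
          ≤ max (κD * ξ k) (‖s k‖ ^ (p + 1)) := by
        have h0 : (0:ℝ) ≤ max (κD * ξ k) (‖s k‖ ^ (p + 1)) :=
          le_max_of_le_right (by positivity)
        refine le_of_pow_le_pow_left₀ (Nat.succ_ne_zero p) h0 ?_
        have e1 : (‖T k - iteratedFDeriv ℝ p f (x k)‖ * ‖s k‖ ^ p) ^ (p + 1)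
            = ‖T k - iteratedFDeriv ℝ p f (x k)‖ ^ (p + 1) * (‖s k‖ ^ (p + 1)) ^ p := by
          ring
        rw [e1]
        have h1 : ‖T k - iteratedFDeriv ℝ p f (x k)‖ ^ (p + 1)
            ≤ max (κD * ξ k) (‖s k‖ ^ (p + 1)) := le_trans (ha k) (le_max_left _ _)
        have h2 : (‖s k‖ ^ (p + 1)) ^ p ≤ (max (κD * ξ k) (‖s k‖ ^ (p + 1))) ^ p :=
          pow_le_pow_left₀ (by positivity) (le_max_right _ _) p
        calc ‖T k - iteratedFDeriv ℝ p f (x k)‖ ^ (p + 1) * (‖s k‖ ^ (p + 1)) ^ p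
            ≤ max (κD * ξ k) (‖s k‖ ^ (p + 1)) *
              (max (κD * ξ k) (‖s k‖ ^ (p + 1))) ^ p := by
              apply mul_le_mul h1 h2 (by positivity) h0
          _ = (max (κD * ξ k) (‖s k‖ ^ (p + 1))) ^ (p + 1) := by
              rw [pow_succ]; ring
      have hmax2 : max (κD * ξ k) (‖s k‖ ^ (p + 1)) ≤ κD * ξ k + W k := by
        apply max_le
        · have : 0 ≤ W k := hWnn k
          linarith
        · have h1 : 0 ≤ κD * ξ k := mul_nonneg hκD (hξnn k)
          rw [hWval k]
          linarith
      linarith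
    -- bound the p-th derivative term by the inexact tensor
    have hDle : iteratedFDeriv ℝ p f (x k) (fun _ => s k)
        ≤ T k (fun _ => s k) + (κD * ξ k + W k) := by
      have e : iteratedFDeriv ℝ p f (x k) (fun _ => s k) - T k (fun _ => s k)
          = (iteratedFDeriv ℝ p f (x k) - T k) (fun _ => s k) := by
        simp [ContinuousMultilinearMap.sub_apply]
      have h1 : (iteratedFDeriv ℝ p f (x k) - T k) (fun _ => s k)
          ≤ ‖iteratedFDeriv ℝ p f (x k) - T k‖ * ‖s k‖ ^ p := by
        calc (iteratedFDeriv ℝ p f (x k) - T k) (fun _ => s k)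
            ≤ ‖(iteratedFDeriv ℝ p f (x k) - T k) (fun _ : Fin p => s k)‖ := le_abs_self _
          _ ≤ ‖iteratedFDeriv ℝ p f (x k) - T k‖ * ‖s k‖ ^ p := by
              have := (iteratedFDeriv ℝ p f (x k) - T k).le_opNorm (fun _ : Fin p => s k)
              simpa [Finset.prod_const] using this
      have h2 : ‖iteratedFDeriv ℝ p f (x k) - T k‖ = ‖T k - iteratedFDeriv ℝ p f (x k)‖ :=
        norm_sub_rev _ _
      rw [h2] at h1
      have h3 := le_trans h1 hkey
      linarith [e ▸ h3]
    -- assemble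
    have hbk : (∑ i ∈ Finset.Icc 1 (p - 1),
          (1 / (i.factorial : ℝ)) * iteratedFDeriv ℝ i f (x k) (fun _ => s k)) +
        c * T k (fun _ => s k) + σ k / P1 * W k ≤ 0 := by
      rw [hWval k]
      exact hb k
    have hmul : c * iteratedFDeriv ℝ p f (x k) (fun _ => s k)
        ≤ c * T k (fun _ => s k) + c * κD * ξ k + c * W k := by
      have h := mul_le_mul_of_nonneg_left hDle hc0.le
      have e : c * (T k (fun _ => s k) + (κD * ξ k + W k))
          = c * T k (fun _ => s k) + c * κD * ξ k + c * W k := by ring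
      linarith
    have e2 : Lp / (p.factorial : ℝ) * ‖s k‖ ^ (p + 1) = Lp * (c * W k) := by
      rw [hc_def, hWval k]; ring
    have e3 : (1 / (p.factorial : ℝ)) = c := hc_def.symm
    rw [e2, e3] at htay
    have e4 : c * (Lp + 1) * W k = Lp * (c * W k) + c * W k := by ring
    rw [e4]
    linarith
  -- telescoping sum
  have hsum : ∀ K, (∑ k ∈ Finset.range K, σ k / P1 * W k) ≤
      (f (x 0) - f_low) + c * κD * (∑ k ∈ Finset.range K, ξ k)
        + c * (Lp + 1) * (∑ k ∈ Finset.range K, W k) := by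
    intro K
    have h1 : (∑ k ∈ Finset.range K, σ k / P1 * W k) ≤
        ∑ k ∈ Finset.range K,
          ((f (x k) - f (x (k + 1))) + (c * κD * ξ k + c * (Lp + 1) * W k)) := by
      apply Finset.sum_le_sum
      intro k _
      have := hstep k
      linarith
    have h2 : (∑ k ∈ Finset.range K,
        ((f (x k) - f (x (k + 1))) + (c * κD * ξ k + c * (Lp + 1) * W k)))
        = (f (x 0) - f (x K)) + (c * κD * (∑ k ∈ Finset.range K, ξ k)
          + c * (Lp + 1) * (∑ k ∈ Finset.range K, W k)) := by
      rw [Finset.sum_add_distrib, Finset.sum_add_distrib,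
        Finset.sum_range_sub' (fun k => f (x k)), Finset.mul_sum, Finset.mul_sum]
    rw [h2] at h1
    have h3 := hflow (x K)
    linarith
  -- bounding the sum of ξ's
  have hclaim : ∀ i, ∀ K,
      (∑ k ∈ Finset.range K, (if i ≤ k then W (k - i) else (1:ℝ)))
        ≤ (∑ j ∈ Finset.range (K - i), W j) + ((min K i : ℕ) : ℝ) := by
    intro i K
    induction K with
    | zero => simp
    | succ K ih =>
      rw [Finset.sum_range_succ]
      by_cases hik : i ≤ K
      · rw [if_pos hik]
        have hKi : K + 1 - i = (K - i) + 1 := by omega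
        have hmin : min (K + 1) i = min K i := by omega
        rw [hKi, Finset.sum_range_succ, hmin]
        linarith
      · rw [if_neg hik]
        have hKi : K + 1 - i = K - i := by omega
        have hmin : min (K + 1) i = min K i + 1 := by omega
        rw [hKi, hmin]
        push_cast at ih ⊢
        linarith
  have hξsum : ∀ K, (∑ k ∈ Finset.range K, ξ k) ≤
      M' * (∑ k ∈ Finset.range K, W k) + M' * M' := by
    intro K
    have h1 : (∑ k ∈ Finset.range K, ξ k)
        = ∑ i ∈ Finset.Icc 1 M, ∑ k ∈ Finset.range K,
            (if i ≤ k then W (k - i) else (1:ℝ)) := by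
      rw [Finset.sum_comm]
      apply Finset.sum_congr rfl
      intro k _
      exact hξ2 k
    rw [h1]
    have h2 : ∀ i ∈ Finset.Icc 1 M,
        (∑ k ∈ Finset.range K, (if i ≤ k then W (k - i) else (1:ℝ)))
          ≤ (∑ j ∈ Finset.range K, W j) + M' := by
      intro i hi
      rw [Finset.mem_Icc] at hi
      have h3 := hclaim i K
      have h4 : (∑ j ∈ Finset.range (K - i), W j) ≤ ∑ j ∈ Finset.range K, W j :=
        Finset.sum_le_sum_of_subset_of_nonneg
          (Finset.range_subset_range.mpr (by omega)) (fun j _ _ => hWnn j)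
      have h5 : ((min K i : ℕ) : ℝ) ≤ M' := by
        simp only [hM'_def]
        exact_mod_cast (by omega : min K i ≤ M)
      linarith
    calc (∑ i ∈ Finset.Icc 1 M, ∑ k ∈ Finset.range K,
          (if i ≤ k then W (k - i) else (1:ℝ)))
        ≤ ∑ _i ∈ Finset.Icc 1 M, ((∑ j ∈ Finset.range K, W j) + M') :=
          Finset.sum_le_sum h2
      _ = M' * (∑ k ∈ Finset.range K, W k) + M' * M' := by
          rw [Finset.sum_const, Nat.card_Icc]
          have : M + 1 - 1 = M := by omega
          rw [this, nsmul_eq_mul]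
          simp only [hM'_def]
          ring
  set C : ℝ := c * (Lp + 1) + c * κD * M' with hC_def
  clear_value C
  have hC0 : 0 ≤ C := by
    have h1 : (0:ℝ) ≤ c * (Lp + 1) := mul_nonneg hc0.le (by linarith)
    have h2 : (0:ℝ) ≤ c * κD * M' := mul_nonneg (mul_nonneg hc0.le hκD) (by linarith)
    rw [hC_def]; linarith
  set D : ℝ := (f (x 0) - f_low) + c * κD * (M' * M') with hD_def
  clear_value D
  have hD0 : 0 ≤ D := by
    have h1 := hflow (x 0)
    have h2 : (0:ℝ) ≤ c * κD * (M' * M') :=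
      mul_nonneg (mul_nonneg hc0.le hκD) (mul_nonneg (by linarith) (by linarith))
    rw [hD_def]; linarith
  have hmaster : ∀ K, (∑ k ∈ Finset.range K, (σ k / P1 - C) * W k) ≤ D := by
    intro K
    have h1 := hsum K
    have h2 := hξsum K
    have h3 : (∑ k ∈ Finset.range K, (σ k / P1 - C) * W k)
        = (∑ k ∈ Finset.range K, σ k / P1 * W k) - C * (∑ k ∈ Finset.range K, W k) := by
      rw [Finset.mul_sum, ← Finset.sum_sub_distrib]
      apply Finset.sum_congr rfl
      intro k _; ring
    rw [h3]
    have h4 : c * κD * (∑ k ∈ Finset.range K, ξ k)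
        ≤ c * κD * (M' * (∑ k ∈ Finset.range K, W k) + M' * M') :=
      mul_le_mul_of_nonneg_left h2 (mul_nonneg hc0.le hκD)
    have e5 : c * κD * (M' * (∑ k ∈ Finset.range K, W k) + M' * M')
        = c * κD * M' * (∑ k ∈ Finset.range K, W k) + c * κD * (M' * M') := by ring
    have e6 : C * (∑ k ∈ Finset.range K, W k)
        = c * (Lp + 1) * (∑ k ∈ Finset.range K, W k)
          + c * κD * M' * (∑ k ∈ Finset.range K, W k) := by rw [hC_def]; ring
    rw [hD_def]
    linarith
  -- positivity and monotonicity of σ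
  have hσpos : ∀ k, 0 < σ k := by
    intro k
    induction k with
    | zero => rw [hσ0]; exact hσ₀
    | succ k ih =>
      rw [hσrec' k]
      have := mul_nonneg ih.le (hWnn k)
      linarith
  have hσmono : ∀ j k, j ≤ k → σ j ≤ σ k := by
    intro j k hjk
    induction hjk with
    | refl => exact le_rfl
    | @step k hk ih =>
      rw [hσrec' k]
      have := mul_nonneg (hσpos k).le (hWnn k)
      linarith
  -- exponential bound
  have hexp : ∀ a b, a ≤ b →
      σ b ≤ σ a * Real.exp (∑ k ∈ Finset.Ico a b, W k) := by
    intro a b hab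
    induction hab with
    | refl => simp
    | @step b hb ih =>
      rw [hσrec' b, Finset.sum_Ico_succ_top hb, Real.exp_add]
      have h1 : (1 + W b) ≤ Real.exp (W b) := by
        have := Real.add_one_le_exp (W b); linarith
      have h2 : (0:ℝ) ≤ 1 + W b := by linarith [hWnn b]
      have h3 : (0:ℝ) ≤ σ a * Real.exp (∑ k ∈ Finset.Ico a b, W k) :=
        mul_nonneg (hσpos a).le (Real.exp_pos _).le
      calc σ b + σ b * W b = σ b * (1 + W b) := by ring
        _ ≤ (σ a * Real.exp (∑ k ∈ Finset.Ico a b, W k)) * Real.exp (W b) :=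
            mul_le_mul ih h1 h2 h3
        _ = σ a * (Real.exp (∑ k ∈ Finset.Ico a b, W k) * Real.exp (W b)) := by ring
  by_cases hex : ∃ t, P1 * (C + 1) < σ t
  · obtain ⟨t, ht⟩ := hex
    set Wt : ℝ := ∑ k ∈ Finset.range t, W k with hWt_def
    have hWt0 : 0 ≤ Wt := hWt_def ▸ Finset.sum_nonneg fun k _ => hWnn k
    clear_value Wt
    have hIco : ∀ K, (∑ k ∈ Finset.Ico t K, W k) ≤ D + C * Wt := by
      intro K
      have hCWt : (0:ℝ) ≤ C * Wt := mul_nonneg hC0 hWt0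
      rcases le_or_gt K t with h | h
      · rw [Finset.Ico_eq_empty (by omega)]
        simp only [Finset.sum_empty]
        linarith
      · have hm := hmaster K
        have hsplit : (∑ k ∈ Finset.range t, (σ k / P1 - C) * W k)
            + (∑ k ∈ Finset.Ico t K, (σ k / P1 - C) * W k)
            = ∑ k ∈ Finset.range K, (σ k / P1 - C) * W k := by
          rw [Finset.range_eq_Ico, Finset.range_eq_Ico]
          exact Finset.sum_Ico_consecutive (fun k => (σ k / P1 - C) * W k) (Nat.zero_le t) (le_of_lt h)
        have hlow : -(C * Wt) ≤ ∑ k ∈ Finset.range t, (σ k / P1 - C) * W k := by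
          have hle : ∑ k ∈ Finset.range t, (-C * W k)
              ≤ ∑ k ∈ Finset.range t, (σ k / P1 - C) * W k := by
            apply Finset.sum_le_sum
            intro k _
            have h1 : 0 ≤ σ k / P1 * W k :=
              mul_nonneg (div_nonneg (hσpos k).le hP1.le) (hWnn k)
            have h2 : (σ k / P1 - C) * W k - (-C * W k) = σ k / P1 * W k := by ring
            linarith
          have heq : ∑ k ∈ Finset.range t, (-C * W k) = -(C * Wt) := by
            rw [← Finset.mul_sum, hWt_def]
            ring
          linarith
        have hup : (∑ k ∈ Finset.Ico t K, W k)
            ≤ ∑ k ∈ Finset.Ico t K, (σ k / P1 - C) * W k := by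
          apply Finset.sum_le_sum
          intro k hk
          rw [Finset.mem_Ico] at hk
          have h1 : σ t ≤ σ k := hσmono t k hk.1
          have h2 : C + 1 ≤ σ k / P1 := by
            rw [le_div_iff₀ hP1]
            calc (C + 1) * P1 = P1 * (C + 1) := by ring
              _ ≤ σ k := le_trans ht.le h1
          have h3 : (1:ℝ) ≤ σ k / P1 - C := by linarith
          calc W k = 1 * W k := (one_mul _).symm
            _ ≤ (σ k / P1 - C) * W k := mul_le_mul_of_nonneg_right h3 (hWnn k)
        linarith
    refine ⟨σ t * Real.exp (D + C * Wt), fun K => ?_⟩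
    rcases le_or_gt K t with h | h
    · have h1 : σ K ≤ σ t := hσmono K t h
      have h0 : (0:ℝ) ≤ D + C * Wt := by
        have := mul_nonneg hC0 hWt0; linarith
      have h2 : (1:ℝ) ≤ Real.exp (D + C * Wt) := Real.one_le_exp h0
      calc σ K ≤ σ t := h1
        _ ≤ σ t * Real.exp (D + C * Wt) :=
          le_mul_of_one_le_right (hσpos t).le h2
    · have h1 := hexp t K (le_of_lt h)
      have h2 : Real.exp (∑ k ∈ Finset.Ico t K, W k) ≤ Real.exp (D + C * Wt) :=
        Real.exp_le_exp.mpr (hIco K)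
      exact h1.trans (mul_le_mul_of_nonneg_left h2 (hσpos t).le)
  · push_neg at hex
    exact ⟨P1 * (C + 1), hex⟩
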